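/- Under the reformulation, the projection onto the x-variables of the feasible set of the reformulated problem equals the feasible set of the original problem: {x : ∃ y, Ax + (I−P)y + b ≤ 0 and Ex + (I−P')y' + g = 0 for appropriate components y, y'} = {x : 1ᵀ(Ax+b) ≤ 0 and 1ᵀ(Ex+g) = 0}, when P and P' are symmetric doubly stochastic matrices with connected graphs and positive diagonals. -/

import Mathlib

open Matrix Finset

/-- The undirected graph associated with a nonnegative matrix `P`. -/
def assocGraph {n : ℕ} (P : Matrix (Fin n) (Fin n) ℝ) : SimpleGraph (Fin n) where
  Adj i j := i ≠ j ∧ (0 < P i j ∨ 0 < P j i)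
  symm := ⟨by intro i j h; exact ⟨h.1.symm, h.2.symm⟩⟩
  loopless := ⟨by intro i h; exact h.1 rfl⟩

lemma sum_sub_mulVec {n : ℕ} (P : Matrix (Fin n) (Fin n) ℝ)
    (hsymm : P.IsSymm) (hrow : ∀ i, ∑ j, P i j = 1) (y : Fin n → ℝ) :
    ∑ i, (1 - P).mulVec y i = 0 := by
  have hcol : ∀ j, ∑ i, P i j = 1 := by
    intro j
    calc ∑ i, P i j = ∑ i, P j i := Finset.sum_congr rfl fun i _ => hsymm.apply j i
    _ = 1 := hrow j
  have h1 : ∀ i, (1 - P).mulVec y i = y i - ∑ j, P i j * y j := by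
    intro i
    rw [Matrix.sub_mulVec, Matrix.one_mulVec]
    simp [Matrix.mulVec, dotProduct]
  calc ∑ i, (1 - P).mulVec y i = ∑ i, (y i - ∑ j, P i j * y j) :=
        Finset.sum_congr rfl fun i _ => h1 i
    _ = ∑ i, y i - ∑ i, ∑ j, P i j * y j := by rw [Finset.sum_sub_distrib]
    _ = ∑ i, y i - ∑ j, (∑ i, P i j) * y j := by rw [Finset.sum_comm]; simp [Finset.sum_mul]
    _ = 0 := by simp [hcol]

lemma exists_solution {n : ℕ} (P : Matrix (Fin n) (Fin n) ℝ)
    (hsymm : P.IsSymm) (hnonneg : ∀ i j, 0 ≤ P i j)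
    (hrow : ∀ i, ∑ j, P i j = 1)
    (hconn : (assocGraph P).Connected)
    (c : Fin n → ℝ) (hc : ∑ i, c i = 0) :
    ∃ y, (1 - P).mulVec y = c := by
  haveI hne : Nonempty (Fin n) := hconn.nonempty
  have hn : 0 < n := Fin.pos_iff_nonempty.2 hne
  set T : (Fin n → ℝ) →ₗ[ℝ] (Fin n → ℝ) := Matrix.mulVecLin (1 - P) with hT
  set f : (Fin n → ℝ) →ₗ[ℝ] ℝ := ∑ i, LinearMap.proj i with hf
  have hfapp : ∀ v : Fin n → ℝ, f v = ∑ i, v i := by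
    intro v; simp [hf, LinearMap.proj]
  -- kernel of T is the span of the all-ones vector
  have hker : LinearMap.ker T = Submodule.span ℝ {(fun _ => (1:ℝ) : Fin n → ℝ)} := by
    apply le_antisymm
    · intro y hy
      have hy0 : (1 - P).mulVec y = 0 := hy
      rw [Matrix.sub_mulVec, Matrix.one_mulVec, sub_eq_zero] at hy0
      -- hy0 : y = P.mulVec y
      obtain ⟨i0, hmax⟩ := Finite.exists_max y
      have step : ∀ i j, (assocGraph P).Adj i j → y i = y i0 → y j = y i0 := by
        intro i j hadj hi
        have hPij : 0 < P i j := by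
          rcases hadj.2 with h | h
          · exact h
          · exact hsymm.apply i j ▸ h
        have hyi : ∑ j', P i j' * y j' = y i := by
          have := congrFun hy0 i
          simpa [Matrix.mulVec, dotProduct] using this.symm
        have h0 : ∑ j', P i j' * (y i0 - y j') = 0 := by
          have e1 : ∑ j', P i j' * (y i0 - y j')
              = (∑ j', P i j') * y i0 - ∑ j', P i j' * y j' := by
            rw [Finset.sum_mul, ← Finset.sum_sub_distrib]
            exact Finset.sum_congr rfl fun j' _ => by ring
          rw [e1, hrow i, one_mul, hyi, hi, sub_self]
        have hterm := (Finset.sum_eq_zero_iff_of_nonneg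
          (fun j' _ => mul_nonneg (hnonneg i j') (sub_nonneg.2 (hmax j')))).mp h0 j
          (Finset.mem_univ j)
        rcases mul_eq_zero.mp hterm with h | h
        · exact absurd h (ne_of_gt hPij)
        · linarith
      have haux : ∀ u v : Fin n, (assocGraph P).Walk u v → y u = y i0 → y v = y i0 := by
        intro u v w
        induction w with
        | nil => exact id
        | cons hab p ih => intro ha; exact ih (step _ _ hab ha)
      have hall : ∀ j, y j = y i0 := by
        intro j
        obtain ⟨w⟩ := hconn.preconnected i0 j
        exact haux i0 j w rfl
      refine Submodule.mem_span_singleton.2 ⟨y i0, ?_⟩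
      funext j
      simp [hall j]
    · rw [Submodule.span_le, Set.singleton_subset_iff]
      show (1 - P).mulVec (fun _ => (1:ℝ)) = 0
      rw [Matrix.sub_mulVec, Matrix.one_mulVec]
      funext i
      simp [Matrix.mulVec, dotProduct, hrow i]
  -- range of T is contained in ker f
  have hle : LinearMap.range T ≤ LinearMap.ker f := by
    rintro _ ⟨y, rfl⟩
    rw [LinearMap.mem_ker, hfapp]
    exact sum_sub_mulVec P hsymm hrow y
  -- dimension count
  have hone_ne : (fun _ => (1:ℝ) : Fin n → ℝ) ≠ 0 := by
    intro h
    have := congrFun h (Classical.arbitrary (Fin n))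
    norm_num at this
  have hkerdim : Module.finrank ℝ (LinearMap.ker T) = 1 := by
    rw [hker]; exact finrank_span_singleton hone_ne
  have hfsurj : Function.Surjective f := by
    intro r
    refine ⟨fun _ => r / n, ?_⟩
    rw [hfapp]
    rw [Finset.sum_const, Finset.card_univ, Fintype.card_fin, nsmul_eq_mul]
    field_simp
  have hrn : Module.finrank ℝ (LinearMap.range T) + Module.finrank ℝ (LinearMap.ker T)
      = n := by
    rw [LinearMap.finrank_range_add_finrank_ker T]
    simp [Module.finrank_pi]
  have hrn2 : Module.finrank ℝ (LinearMap.range f) + Module.finrank ℝ (LinearMap.ker f)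
      = n := by
    rw [LinearMap.finrank_range_add_finrank_ker f]
    simp [Module.finrank_pi]
  have hrangef : Module.finrank ℝ (LinearMap.range f) = 1 := by
    rw [LinearMap.range_eq_top.2 hfsurj]
    simp
  have heq : LinearMap.range T = LinearMap.ker f := by
    apply Submodule.eq_of_le_of_finrank_le hle
    omega
  have hc' : c ∈ LinearMap.ker f := by rw [LinearMap.mem_ker, hfapp]; exact hc
  rw [← heq] at hc'
  obtain ⟨y, hy⟩ := hc'
  exact ⟨y, hy⟩

theorem projection_of_feasible_set
    {n d : ℕ} (P P' : Matrix (Fin n) (Fin n) ℝ)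
    (hsymm : P.IsSymm) (hsymm' : P'.IsSymm)
    (hnonneg : ∀ i j, 0 ≤ P i j) (hnonneg' : ∀ i j, 0 ≤ P' i j)
    (hrow : ∀ i, ∑ j, P i j = 1) (hrow' : ∀ i, ∑ j, P' i j = 1)
    (hdiag : ∀ i, 0 < P i i) (hdiag' : ∀ i, 0 < P' i i)
    (hconn : (assocGraph P).Connected) (hconn' : (assocGraph P').Connected)
    (A E : Matrix (Fin n) (Fin d) ℝ) (b g : Fin n → ℝ) :
    {x : Fin d → ℝ |
        ∃ y y' : Fin n → ℝ,
          (∀ i, A.mulVec x i + (1 - P).mulVec y i + b i ≤ 0) ∧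
          (∀ i, E.mulVec x i + (1 - P').mulVec y' i + g i = 0)} =
    {x : Fin d → ℝ |
        ∑ i, (A.mulVec x i + b i) ≤ 0 ∧ ∑ i, (E.mulVec x i + g i) = 0} := by
  haveI hne : Nonempty (Fin n) := hconn.nonempty
  have hn : 0 < n := Fin.pos_iff_nonempty.2 hne
  ext x
  simp only [Set.mem_setOf_eq]
  constructor
  · rintro ⟨y, y', h1, h2⟩
    have s1 := sum_sub_mulVec P hsymm hrow y
    have s2 := sum_sub_mulVec P' hsymm' hrow' y'
    have e1 : ∑ i, (A.mulVec x i + (1 - P).mulVec y i + b i)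
        = ∑ i, A.mulVec x i + ∑ i, (1 - P).mulVec y i + ∑ i, b i := by
      rw [Finset.sum_add_distrib, Finset.sum_add_distrib]
    have e2 : ∑ i, (E.mulVec x i + (1 - P').mulVec y' i + g i)
        = ∑ i, E.mulVec x i + ∑ i, (1 - P').mulVec y' i + ∑ i, g i := by
      rw [Finset.sum_add_distrib, Finset.sum_add_distrib]
    have eA : ∑ i, (A.mulVec x i + b i) = ∑ i, A.mulVec x i + ∑ i, b i :=
      Finset.sum_add_distrib
    have eE : ∑ i, (E.mulVec x i + g i) = ∑ i, E.mulVec x i + ∑ i, g i :=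
      Finset.sum_add_distrib
    have hs1 : ∑ i, (A.mulVec x i + (1 - P).mulVec y i + b i) ≤ 0 :=
      Finset.sum_nonpos fun i _ => h1 i
    have hs2 : ∑ i, (E.mulVec x i + (1 - P').mulVec y' i + g i) = 0 :=
      Finset.sum_eq_zero fun i _ => h2 i
    constructor
    · linarith [e1 ▸ hs1]
    · linarith [e2 ▸ hs2]
  · rintro ⟨h1, h2⟩
    set s := ∑ i, (A.mulVec x i + b i) with hs
    obtain ⟨y, hy⟩ := exists_solution P hsymm hnonneg hrow hconn
      (fun i => -(A.mulVec x i + b i) + s / n)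
      (by
        rw [Finset.sum_add_distrib, Finset.sum_neg_distrib, ← hs, Finset.sum_const,
          Finset.card_univ, Fintype.card_fin, nsmul_eq_mul]
        field_simp
        ring)
    obtain ⟨y', hy'⟩ := exists_solution P' hsymm' hnonneg' hrow' hconn'
      (fun i => -(E.mulVec x i + g i))
      (by rw [Finset.sum_neg_distrib, h2, neg_zero])
    refine ⟨y, y', ?_, ?_⟩
    · intro i
      have := congrFun hy i
      rw [this]
      have hdiv : s / n ≤ 0 := div_nonpos_iff.2 (Or.inr ⟨h1, Nat.cast_nonneg n⟩)
      linarith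
    · intro i
      have := congrFun hy' i
      rw [this]
      ring
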